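/- Let λ be a partition of n and β any composition with underlying partition shape λ. Define for each row-strict composition tableau Υ of shape β the monomial x^Υ = ∏_{(i,j) ∈ Inv(Υ)} x_i. Then the set {x^Υ : Υ ∈ RSCT_n(β)} equals the Garsia–Procesi monomial set Sp_λ defined recursively by Sp_λ = ⊔_{1 ≤ i ≤ k} x_{m̄}^{i−1} Sp_{λ[i]} (in the variables indexed by the minimal content value, with initial condition Sp_{(1)} = {1}). In particular this set depends only on λ and not on the ordering of the parts of β. -/

import Mathlib

open Finset

/-- The content interval `[n-m+1, n]` of a shifted tableau. -/
def content (n m : ℕ) : Finset ℕ := Finset.Icc (n - m + 1) n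

lemma content_mono (n m : ℕ) : content n (m - 1) ⊆ content n m := by
  intro x hx
  simp only [content, Finset.mem_Icc] at *
  omega

/-- A (shifted) row-strict composition tableau of shape `β` (a weak composition of `m` with
`k` parts) and content `[n-m+1, n]`, encoded by the assignment of each entry to its row.
(The filling of each row is determined by its set of entries, since entries strictly decrease
from left to right in each row.) -/
abbrev RSCT (n m k : ℕ) (β : Fin k → ℕ) : Type :=
  {row : {i : ℕ // i ∈ content n m} → Fin k //
    ∀ j : Fin k, (Finset.univ.filter fun i => row i = j).card = β j}

/-- The (0-indexed) column of entry `i`: the number of larger entries in its own row. -/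
def colOf {n m k : ℕ} {β : Fin k → ℕ} (T : RSCT n m k β)
    (i : {a : ℕ // a ∈ content n m}) : ℕ :=
  (Finset.univ.filter fun i' : {a : ℕ // a ∈ content n m} =>
    T.val i' = T.val i ∧ (i : ℕ) < (i' : ℕ)).card

/-- `(i, j)` is a Springer inversion of `T`: there is an entry `i' > i` in row `j` that is
either directly above `i` in the same column, or in a column strictly to the right of the
column of `i`. -/
def isInv {n m k : ℕ} {β : Fin k → ℕ} (T : RSCT n m k β) (i : ℕ) (j : Fin k) : Prop :=
  ∃ (hi : i ∈ content n m) (i' : {a : ℕ // a ∈ content n m}),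
    T.val i' = j ∧ i < (i' : ℕ) ∧
      (colOf T ⟨i, hi⟩ < colOf T i' ∨
        (colOf T i' = colOf T ⟨i, hi⟩ ∧ j < T.val ⟨i, hi⟩))

/-- The finite set of Springer inversions of `T`. -/
noncomputable def InvF {n m k : ℕ} {β : Fin k → ℕ} (T : RSCT n m k β) :
    Finset (ℕ × Fin k) :=
  @Finset.filter (ℕ × Fin k) (fun p => isInv T p.1 p.2) (Classical.decPred _)
    ((content n m) ×ˢ (Finset.univ : Finset (Fin k)))

/-- The inversion vector of `T`: `invVec T i` is the number of Springer inversions of `T`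
with first coordinate `i`. -/
noncomputable def invVec {n m k : ℕ} {β : Fin k → ℕ} (T : RSCT n m k β) (i : ℕ) : ℕ :=
  ((InvF T).filter fun p => p.1 = i).card

/-- `etaRel T T'` expresses that `T'` is obtained from `T` by removing the box containing
the minimal entry `n - m + 1` (which lies at the end of its row). -/
def etaRel {n m k : ℕ} {β β' : Fin k → ℕ} (T : RSCT n m k β)
    (T' : RSCT n (m - 1) k β') : Prop :=
  (∃ h : n - m + 1 ∈ content n m,
      β' = Function.update β (T.val ⟨n - m + 1, h⟩) (β (T.val ⟨n - m + 1, h⟩) - 1)) ∧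
  ∀ (i : ℕ) (hi : i ∈ content n (m - 1)),
      T'.val ⟨i, hi⟩ = T.val ⟨i, content_mono n m hi⟩
/-- The specification of the recursive total order on row-strict composition tableaux:
if the minimal entries lie in different rows, compare via Springer inversions; if they lie
in the same row, compare the tableaux obtained by removing the minimal entry; the relation
is empty on empty tableaux. -/
def OrderSpec (n k : ℕ)
    (R : ∀ (m : ℕ) (β : Fin k → ℕ), RSCT n m k β → RSCT n m k β → Prop) : Prop :=
  (∀ (β : Fin k → ℕ) (T T' : RSCT n 0 k β), ¬ R 0 β T T') ∧
  (∀ (m : ℕ) (β : Fin k → ℕ) (Υ Ω : RSCT n m k β) (h : n - m + 1 ∈ content n m),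
      Υ.val ⟨n - m + 1, h⟩ ≠ Ω.val ⟨n - m + 1, h⟩ →
      (R m β Ω Υ ↔ isInv Υ (n - m + 1) (Ω.val ⟨n - m + 1, h⟩))) ∧
  (∀ (m : ℕ) (β : Fin k → ℕ) (Υ Ω : RSCT n m k β) (h : n - m + 1 ∈ content n m),
      Υ.val ⟨n - m + 1, h⟩ = Ω.val ⟨n - m + 1, h⟩ →
      ∀ (β' : Fin k → ℕ) (Υ' Ω' : RSCT n (m - 1) k β'),
        etaRel Υ Υ' → etaRel Ω Ω' → (R m β Ω Υ ↔ R (m - 1) β' Ω' Υ'))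

/-- The equivariant Springer monomial `P_Υ(z, x) = ∏_{(i,j) ∈ Inv(Υ)} (x_i − z_j)`,
with `x`-variables indexed by `Sum.inl` and `z`-variables by `Sum.inr`. -/
noncomputable def Ppoly {n m k : ℕ} {β : Fin k → ℕ} (T : RSCT n m k β) :
    MvPolynomial (ℕ ⊕ Fin k) ℂ :=
  ∏ p ∈ InvF T, (MvPolynomial.X (Sum.inl p.1) - MvPolynomial.X (Sum.inr p.2))

/-- The localization map `φ_{w_Ω}`, substituting `x_i ↦ z_{r(i,Ω)}` where `r(i,Ω)` is the
row of `Ω` containing `i`, and fixing the `z`-variables. -/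
noncomputable def loc {n m k : ℕ} {β : Fin k → ℕ} (Ω : RSCT n m k β) :
    MvPolynomial (ℕ ⊕ Fin k) ℂ →ₐ[ℂ] MvPolynomial (Fin k) ℂ :=
  MvPolynomial.aeval fun v => match v with
    | Sum.inl i => if h : i ∈ content n m then MvPolynomial.X (Ω.val ⟨i, h⟩) else 0
    | Sum.inr j => MvPolynomial.X j

/-- Evaluation of all `z`-variables at `0`. -/
noncomputable def evz (k : ℕ) : MvPolynomial (ℕ ⊕ Fin k) ℂ →ₐ[ℂ] MvPolynomial ℕ ℂ :=
  MvPolynomial.aeval fun v => match v with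
    | Sum.inl i => MvPolynomial.X i
    | Sum.inr _ => 0

/-- The Lehmer code of a permutation: `pcode w k = #{j > k : w j < w k}`. -/
def pcode {n : ℕ} (w : Equiv.Perm (Fin n)) (i : Fin n) : ℕ :=
  (Finset.univ.filter fun j => i < j ∧ w j < w i).card

/-- The Coxeter length of a permutation: its number of inversions. -/
def plen {n : ℕ} (w : Equiv.Perm (Fin n)) : ℕ :=
  (Finset.univ.filter fun p : Fin n × Fin n => p.1 < p.2 ∧ w p.2 < w p.1).card

/-- `dropPart μ i` is the partition `μ[i]` (as a multiset of nonzero parts): decrease the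
`i`-th largest part of `μ` (0-indexed) by one and drop zero parts. -/
def dropPart (μ : Multiset ℕ) (i : ℕ) : Multiset ℕ :=
  Multiset.filter (· ≠ 0)
    ((μ.erase (((μ.sort (· ≤ ·)).reverse).getD i 0)) +
      {((μ.sort (· ≤ ·)).reverse).getD i 0 - 1})

/-- The recursive Garsia–Procesi specification: `SP μ s` is the set of Springer monomials
(given as exponent vectors) for the partition `μ` in the variables `x_s, x_{s+1}, …`:
`SP_λ = ⊔_{0 ≤ i < k} x_s^{i} · SP_{λ[i]}` (variables shifted by one in the recursion),
with `SP_∅ = {1}`. -/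
def SPSpec (SP : Multiset ℕ → ℕ → Set (ℕ → ℕ)) : Prop :=
  (∀ s : ℕ, SP 0 s = {fun _ => 0}) ∧
  (∀ (μ : Multiset ℕ) (s : ℕ), μ ≠ 0 →
      SP μ s = {e | ∃ i < Multiset.card μ, ∃ f ∈ SP (dropPart μ i) (s + 1),
                    e = fun t => (if t = s then i else 0) + f t})


lemma card_filter_eq_fin {α : Type*} [LinearOrder α] (S : Finset α) (p : α → Prop)
    [DecidablePred p] :
    (S.filter p).card =
      (Finset.univ.filter fun u : Fin S.card => p (S.orderIsoOfFin rfl u)).card := by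
  apply Finset.card_bij (fun x hx => (S.orderIsoOfFin rfl).symm ⟨x, (Finset.mem_filter.1 hx).1⟩)
  · intro a ha
    simp only [Finset.mem_filter, Finset.mem_univ, true_and]
    rw [OrderIso.apply_symm_apply]
    exact (Finset.mem_filter.1 ha).2
  · intro a ha b hb h
    have := congrArg (fun u => ((S.orderIsoOfFin rfl) u : α)) h
    simpa using this
  · intro u hu
    refine ⟨(S.orderIsoOfFin rfl u : α), Finset.mem_filter.2 ⟨(S.orderIsoOfFin rfl u).2, (Finset.mem_filter.1 hu).2⟩, ?_⟩
    have : (⟨((S.orderIsoOfFin rfl u : {x // x ∈ S}) : α), (S.orderIsoOfFin rfl u).2⟩ : {x // x ∈ S}) = S.orderIsoOfFin rfl u := Subtype.ext rfl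
    rw [this, OrderIso.symm_apply_apply]

lemma exists_rank_lt {α : Type*} [LinearOrder α] (S : Finset α) (t : ℕ) (ht : t < S.card) :
    ∃ x ∈ S, (S.filter fun y => y < x).card = t := by
  refine ⟨S.orderIsoOfFin rfl ⟨t, ht⟩, (S.orderIsoOfFin rfl ⟨t, ht⟩).2, ?_⟩
  rw [card_filter_eq_fin]
  have : (Finset.univ.filter fun u : Fin S.card =>
      ((S.orderIsoOfFin rfl u : {x // x ∈ S}) : α) < S.orderIsoOfFin rfl ⟨t, ht⟩)
      = Finset.Iio ⟨t, ht⟩ := by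
    ext u
    simp [Subtype.coe_lt_coe, (S.orderIsoOfFin rfl).lt_iff_lt]
  rw [this, Fin.card_Iio]

lemma exists_rank_gt {α : Type*} [LinearOrder α] (S : Finset α) (t : ℕ) (ht : t < S.card) :
    ∃ x ∈ S, (S.filter fun y => x < y).card = t := by
  have h1 : S.card - 1 - t < S.card := by omega
  refine ⟨S.orderIsoOfFin rfl ⟨S.card - 1 - t, h1⟩, (S.orderIsoOfFin rfl ⟨_, h1⟩).2, ?_⟩
  rw [card_filter_eq_fin]
  have : (Finset.univ.filter fun u : Fin S.card =>
      ((S.orderIsoOfFin rfl ⟨S.card - 1 - t, h1⟩ : {x // x ∈ S}) : α) < S.orderIsoOfFin rfl u)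
      = Finset.Ioi ⟨S.card - 1 - t, h1⟩ := by
    ext u
    simp [Subtype.coe_lt_coe, (S.orderIsoOfFin rfl).lt_iff_lt]
  rw [this, Fin.card_Ioi]
  simp only [Fin.val_mk]
  omega

lemma sorted_getD (L : List ℕ) (hL : L.Pairwise (· ≥ ·)) (v : ℕ) :
    ∀ i, L.countP (fun x => decide (v < x)) ≤ i → i < L.countP (fun x => decide (v ≤ x)) →
    L.getD i 0 = v := by
  induction L with
  | nil => intro i h1 h2; simp at h2
  | cons a tl ih =>
    have ha : ∀ x ∈ tl, x ≤ a := fun x hx => (List.pairwise_cons.1 hL).1 x hx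
    have htl : tl.Pairwise (· ≥ ·) := (List.pairwise_cons.1 hL).2
    intro i h1 h2
    rw [List.countP_cons] at h1 h2
    match i with
    | 0 =>
      have hva : ¬ (v < a) := by
        by_contra h
        simp [h] at h1
      have : v ≤ a := by
        by_contra h
        push_neg at h
        have h0 : tl.countP (fun x => decide (v ≤ x)) = 0 := by
          rw [List.countP_eq_zero]
          intro x hx
          simpa using lt_of_le_of_lt (ha x hx) h
        simp [h0, not_le.2 h] at h2
      have hav : a = v := le_antisymm (not_lt.1 hva) this
      simpa using hav
    | i + 1 =>
      simp only [List.getD_cons_succ]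
      by_cases hva : v < a
      · refine ih htl i ?_ ?_
        · simp [hva] at h1; omega
        · have : v ≤ a := le_of_lt hva
          simp [decide_eq_true_eq, this] at h2
          omega
      · have h0 : tl.countP (fun x => decide (v < x)) = 0 := by
          rw [List.countP_eq_zero]
          intro x hx
          simp only [decide_eq_true_eq, not_lt]
          exact le_trans (ha x hx) (not_lt.1 hva)
        refine ih htl i (by omega) ?_
        have : (if (decide (v ≤ a) : Bool) = true then 1 else 0) ≤ 1 := by split <;> omega
        omega

lemma getD_count (L : List ℕ) (hL : L.Pairwise (· ≥ ·)) :
    ∀ i, i < L.length →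
      L.countP (fun x => decide (L.getD i 0 < x)) ≤ i ∧
      i < L.countP (fun x => decide (L.getD i 0 ≤ x)) := by
  induction L with
  | nil => intro i h; simp at h
  | cons a tl ih =>
    have ha : ∀ x ∈ tl, x ≤ a := fun x hx => (List.pairwise_cons.1 hL).1 x hx
    have htl : tl.Pairwise (· ≥ ·) := (List.pairwise_cons.1 hL).2
    intro i hi
    match i with
    | 0 =>
      simp only [List.getD_cons_zero, List.countP_cons]
      constructor
      · have h0 : tl.countP (fun x => decide (a < x)) = 0 := by
          rw [List.countP_eq_zero]
          intro x hx
          simpa using ha x hx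
        simp [h0]
      · simp
    | i + 1 =>
      simp only [List.getD_cons_succ, List.countP_cons]
      have hi' : i < tl.length := by simpa using hi
      obtain ⟨c1, c2⟩ := ih htl i hi'
      have hmem : tl.getD i 0 ∈ tl := by
        rw [List.getD_eq_getElem tl 0 hi']
        exact List.getElem_mem _
      have hle : tl.getD i 0 ≤ a := ha _ hmem
      constructor
      · have : (if (decide (tl.getD i 0 < a) : Bool) = true then 1 else 0) ≤ 1 := by split <;> omega
        omega
      · simp only [decide_eq_true_eq, hle, if_pos]
        omega

/-- `↑(List.ofFn β)` as a map over `univ.val`. -/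
lemma ofFn_eq_map_univ {k : ℕ} (β : Fin k → ℕ) :
    (↑(List.ofFn β) : Multiset ℕ) = Multiset.map β Finset.univ.val := by
  rw [List.ofFn_eq_map, Fin.univ_def]
  rfl

lemma countP_ofFn {k : ℕ} (β : Fin k → ℕ) (p : ℕ → Prop) [DecidablePred p] :
    Multiset.countP p (↑(List.ofFn β) : Multiset ℕ) =
      (Finset.univ.filter fun j => p (β j)).card := by
  rw [ofFn_eq_map_univ, Multiset.countP_map]
  rfl

/-- nonzero parts of `β`. -/
def parts {k : ℕ} (β : Fin k → ℕ) : Multiset ℕ :=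
  Multiset.filter (· ≠ 0) (↑(List.ofFn β) : Multiset ℕ)

lemma countP_parts {k : ℕ} (β : Fin k → ℕ) (p : ℕ → Prop) [DecidablePred p]
    (hp : ∀ x, p x → x ≠ 0) :
    Multiset.countP p (parts β) = (Finset.univ.filter fun j => p (β j)).card := by
  rw [parts, Multiset.countP_filter]
  rw [← countP_ofFn β p]
  apply Multiset.countP_congr rfl
  intro x _
  rw [eq_iff_iff]
  exact ⟨fun h => h.1, fun h => ⟨h, hp x h⟩⟩

lemma card_parts {k : ℕ} (β : Fin k → ℕ) :
    Multiset.card (parts β) = (Finset.univ.filter fun j => β j ≠ 0).card := by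
  rw [parts, ← Multiset.countP_eq_card_filter]
  exact countP_ofFn β (· ≠ 0)

/-- the descending sorted list of `parts β`. -/
def dlist {k : ℕ} (β : Fin k → ℕ) : List ℕ := ((parts β).sort (· ≤ ·)).reverse

lemma dlist_sorted {k : ℕ} (β : Fin k → ℕ) : (dlist β).Pairwise (· ≥ ·) := by
  rw [dlist, List.pairwise_reverse]
  simp only [ge_iff_le]
  exact Multiset.pairwise_sort ..

lemma dlist_length {k : ℕ} (β : Fin k → ℕ) :
    (dlist β).length = Multiset.card (parts β) := by
  rw [dlist, List.length_reverse, Multiset.length_sort]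

lemma dlist_countP {k : ℕ} (β : Fin k → ℕ) (p : ℕ → Prop) [DecidablePred p] :
    (dlist β).countP (fun x => decide (p x)) = Multiset.countP p (parts β) := by
  rw [dlist, List.countP_reverse]
  have : Multiset.countP p (parts β) = Multiset.countP p ↑((parts β).sort (· ≤ ·)) := by
    rw [Multiset.sort_eq]
  rw [this, Multiset.coe_countP]

lemma dlist_mem {k : ℕ} (β : Fin k → ℕ) {x : ℕ} (hx : x ∈ dlist β) : x ∈ parts β := by
  rw [dlist, List.mem_reverse] at hx
  rwa [← Multiset.mem_sort (· ≤ ·)]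

/-- the rank statistic `c(r)`. -/
def cRank {k : ℕ} (β : Fin k → ℕ) (r : Fin k) : ℕ :=
  (Finset.univ.filter fun j => β r < β j).card +
    (Finset.univ.filter fun j => j < r ∧ β j = β r).card

lemma cRank_core {k : ℕ} (β : Fin k → ℕ) (r : Fin k) :
    (Finset.univ.filter fun j => β r < β j).card +
      (Finset.univ.filter fun j => β j = β r).card
      = (Finset.univ.filter fun j => β r ≤ β j).card := by
  rw [← Finset.card_union_of_disjoint]
  · congr 1
    ext j
    simp only [Finset.mem_union, Finset.mem_filter, Finset.mem_univ, true_and]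
    omega
  · rw [Finset.disjoint_left]
    intro j h1 h2
    simp only [Finset.mem_filter, Finset.mem_univ, true_and] at h1 h2
    omega

lemma cRank_lt {k : ℕ} (β : Fin k → ℕ) (r : Fin k) (hr : β r ≠ 0) :
    cRank β r < Multiset.card (parts β) := by
  rw [card_parts, cRank]
  have h1 : (Finset.univ.filter fun j => j < r ∧ β j = β r).card <
      (Finset.univ.filter fun j => β j = β r).card := by
    apply Finset.card_lt_card
    constructor
    · intro j hj
      simp only [Finset.mem_filter, Finset.mem_univ, true_and] at *
      exact hj.2
    · intro hsub
      have := hsub (Finset.mem_filter.2 ⟨Finset.mem_univ r, rfl⟩)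
      simp at this
  have h2 : (Finset.univ.filter fun j => β r ≤ β j).card ≤
      (Finset.univ.filter fun j => β j ≠ 0).card := by
    apply Finset.card_le_card
    intro j hj
    simp only [Finset.mem_filter, Finset.mem_univ, true_and] at *
    omega
  have := cRank_core β r
  omega

lemma cRank_getD {k : ℕ} (β : Fin k → ℕ) (r : Fin k) (hr : β r ≠ 0) :
    (dlist β).getD (cRank β r) 0 = β r := by
  apply sorted_getD _ (dlist_sorted β)
  · rw [dlist_countP β (fun x => β r < x), countP_parts β _ (fun x h => by omega)]
    rw [cRank]; omega
  · rw [dlist_countP β (fun x => β r ≤ x), countP_parts β _ (fun x h => by omega)]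
    have h1 : (Finset.univ.filter fun j => j < r ∧ β j = β r).card <
        (Finset.univ.filter fun j => β j = β r).card := by
      apply Finset.card_lt_card
      constructor
      · intro j hj
        simp only [Finset.mem_filter, Finset.mem_univ, true_and] at *
        exact hj.2
      · intro hsub
        have := hsub (Finset.mem_filter.2 ⟨Finset.mem_univ r, rfl⟩)
        simp at this
    have := cRank_core β r
    rw [cRank]; omega

lemma cRank_surj {k : ℕ} (β : Fin k → ℕ) (i : ℕ) (hi : i < Multiset.card (parts β)) :
    ∃ r : Fin k, β r ≠ 0 ∧ cRank β r = i := by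
  set v := (dlist β).getD i 0 with hv
  have hiL : i < (dlist β).length := by rwa [dlist_length]
  have hvmem : v ∈ parts β := by
    apply dlist_mem
    rw [hv, List.getD_eq_getElem _ 0 hiL]
    exact List.getElem_mem _
  have hv0 : v ≠ 0 := by
    rw [parts, Multiset.mem_filter] at hvmem
    exact hvmem.2
  obtain ⟨c1, c2⟩ := getD_count (dlist β) (dlist_sorted β) i hiL
  rw [dlist_countP β (fun x => v < x), countP_parts β _ (fun x h => by omega)] at c1
  rw [dlist_countP β (fun x => v ≤ x), countP_parts β _ (fun x h => by omega)] at c2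
  set a := (Finset.univ.filter fun j => v < β j).card with ha
  have hcore : a + (Finset.univ.filter fun j => β j = v).card
      = (Finset.univ.filter fun j => v ≤ β j).card := by
    rw [← Finset.card_union_of_disjoint]
    · congr 1
      ext j
      simp only [Finset.mem_union, Finset.mem_filter, Finset.mem_univ, true_and]
      omega
    · rw [Finset.disjoint_left]
      intro j h1 h2
      simp only [Finset.mem_filter, Finset.mem_univ, true_and] at h1 h2
      omega
  have ht : i - a < (Finset.univ.filter fun j => β j = v).card := by omega
  obtain ⟨r, hrS, hrc⟩ := exists_rank_lt (Finset.univ.filter fun j => β j = v) (i - a) ht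
  have hrv : β r = v := (Finset.mem_filter.1 hrS).2
  refine ⟨r, by omega, ?_⟩
  rw [cRank, hrv]
  have : ((Finset.univ.filter fun j => β j = v).filter fun y => y < r) =
      (Finset.univ.filter fun j => j < r ∧ β j = v) := by
    ext j
    simp only [Finset.mem_filter, Finset.mem_univ, true_and]
    tauto
  rw [this] at hrc
  omega

lemma map_univ_cons {k : ℕ} (β : Fin k → ℕ) (r : Fin k) :
    Multiset.map β Finset.univ.val = β r ::ₘ Multiset.map β ((Finset.univ.erase r).val) := by
  have h1 : (Finset.univ.erase r).val = Finset.univ.val.erase r := rfl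
  rw [h1, ← Multiset.map_cons, Multiset.cons_erase (Finset.mem_univ r)]

lemma map_erase_update {k : ℕ} (β : Fin k → ℕ) (r : Fin k) (w : ℕ) :
    Multiset.map (Function.update β r w) ((Finset.univ.erase r).val) =
      Multiset.map β ((Finset.univ.erase r).val) := by
  apply Multiset.map_congr rfl
  intro j hj
  have : j ∈ Finset.univ.erase r := hj
  have hne : j ≠ r := (Finset.mem_erase.1 this).1
  exact Function.update_of_ne hne _ _

lemma dropPart_parts {k : ℕ} (β : Fin k → ℕ) (r : Fin k) (hr : β r ≠ 0) (i : ℕ)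
    (hv : (dlist β).getD i 0 = β r) :
    dropPart (parts β) i = parts (Function.update β r (β r - 1)) := by
  have hd : ((parts β).sort (· ≤ ·)).reverse.getD i 0 = β r := hv
  rw [dropPart, hd]
  have hμ : parts β = β r ::ₘ Multiset.filter (· ≠ 0)
      (Multiset.map β ((Finset.univ.erase r).val)) := by
    rw [parts, ofFn_eq_map_univ, map_univ_cons β r,
      Multiset.filter_cons_of_pos (p := fun x => x ≠ 0) _ hr]
  rw [hμ, Multiset.erase_cons_head]
  rw [parts, ofFn_eq_map_univ, map_univ_cons (Function.update β r (β r - 1)) r,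
    map_erase_update, Function.update_self]
  rw [Multiset.filter_add]
  rw [Multiset.filter_filter]
  have h2 : Multiset.filter (fun a => a ≠ 0 ∧ a ≠ 0) (Multiset.map β ((Finset.univ.erase r).val))
      = Multiset.filter (· ≠ 0) (Multiset.map β ((Finset.univ.erase r).val)) := by
    apply Multiset.filter_congr
    intro x _
    tauto
  rw [h2]
  have h3 : (β r - 1) ::ₘ Multiset.map β ((Finset.univ.erase r).val)
      = Multiset.map β ((Finset.univ.erase r).val) + {β r - 1} := by
    rw [add_comm, ← Multiset.singleton_add]
  rw [h3, Multiset.filter_add]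

section Tableau

variable {n m k : ℕ}

lemma hmem (hm : m + 1 ≤ n) : n - m ∈ content n (m + 1) := by
  simp only [content, Finset.mem_Icc]; omega

lemma hsub (hm : m + 1 ≤ n) : content n m ⊆ content n (m + 1) := by
  intro x hx
  simp only [content, Finset.mem_Icc] at *
  omega

lemma hins (hm : m + 1 ≤ n) : content n (m + 1) = insert (n - m) (content n m) := by
  ext x
  simp only [content, Finset.mem_Icc, Finset.mem_insert]
  omega

lemma hnot : n - m ∉ content n m := by
  simp only [content, Finset.mem_Icc]; omega

lemma card_pred (hm : m + 1 ≤ n) (p : {a : ℕ // a ∈ content n (m + 1)} → Prop)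
    [DecidablePred p] :
    ((content n (m+1)).attach.filter p).card =
      ((content n m).attach.filter fun i : {a : ℕ // a ∈ content n m} =>
        p ⟨i.1, hsub hm i.2⟩).card + (if p ⟨n - m, hmem hm⟩ then 1 else 0) := by
  classical
  let g : ℕ → ℕ := fun a => if h : a ∈ content n (m + 1) then (if p ⟨a, h⟩ then 1 else 0) else 0
  have hL : ((content n (m+1)).attach.filter p).card = ∑ a ∈ content n (m+1), g a := by
    rw [Finset.card_filter, ← Finset.sum_attach (content n (m+1)) g]
    apply Finset.sum_congr rfl
    intro x _
    show (if p x then 1 else 0) = g x.1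
    show (if p x then 1 else 0) = if h : x.1 ∈ content n (m+1) then (if p ⟨x.1, h⟩ then 1 else 0) else 0
    rw [dif_pos x.2]
  have h2 : ∑ a ∈ content n m, g a =
      ((content n m).attach.filter fun i : {a : ℕ // a ∈ content n m} =>
        p ⟨i.1, hsub hm i.2⟩).card := by
    rw [Finset.card_filter, ← Finset.sum_attach (content n m) g]
    apply Finset.sum_congr rfl
    intro x _
    show g x.1 = if p ⟨x.1, hsub hm x.2⟩ then 1 else 0
    show (if h : x.1 ∈ content n (m+1) then (if p ⟨x.1, h⟩ then 1 else 0) else 0)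
      = if p ⟨x.1, hsub hm x.2⟩ then 1 else 0
    rw [dif_pos (hsub hm x.2)]
  have h3 : g (n - m) = if p ⟨n - m, hmem hm⟩ then 1 else 0 := by
    show (if h : n - m ∈ content n (m+1) then (if p ⟨n - m, h⟩ then 1 else 0) else 0)
      = if p ⟨n - m, hmem hm⟩ then 1 else 0
    rw [dif_pos (hmem hm)]
  have hsplit : ∑ a ∈ content n (m+1), g a = g (n - m) + ∑ a ∈ content n m, g a := by
    rw [hins hm]
    exact Finset.sum_insert hnot
  rw [hL, hsplit, h2, h3, add_comm]

/-- number of inversion rows for entry `i`. -/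
noncomputable def cnt {β : Fin k → ℕ} (T : RSCT n m k β) (i : ℕ) : ℕ :=
  (@Finset.filter (Fin k) (fun j => isInv T i j) (Classical.decPred _) Finset.univ).card

lemma invVec_eq_cnt {β : Fin k → ℕ} (T : RSCT n m k β) (i : ℕ) :
    invVec T i = cnt T i := by
  classical
  unfold invVec cnt InvF
  rw [Finset.filter_filter]
  apply Finset.card_bij (fun p _ => p.2)
  · intro p hp
    simp only [Finset.mem_filter, Finset.mem_univ, true_and]
    have := (Finset.mem_filter.1 hp).2
    rw [this.2] at this
    exact this.1
  · intro p hp q hq hpq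
    have h1 := ((Finset.mem_filter.1 hp).2).2
    have h2 := ((Finset.mem_filter.1 hq).2).2
    exact Prod.ext (h1.trans h2.symm) hpq
  · intro j hj
    have hj' : isInv T i j := (Finset.mem_filter.1 hj).2
    obtain ⟨hi, -⟩ := id hj'
    exact ⟨(i, j), Finset.mem_filter.2
      ⟨Finset.mem_product.2 ⟨hi, Finset.mem_univ j⟩, hj', rfl⟩, rfl⟩

lemma cnt_of_not_mem {β : Fin k → ℕ} (T : RSCT n m k β) (i : ℕ) (hi : i ∉ content n m) :
    cnt T i = 0 := by
  classical
  rw [cnt, Finset.card_eq_zero, Finset.filter_eq_empty_iff]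
  intro j _
  rintro ⟨h, -⟩
  exact hi h

end Tableau

section Core

variable {n m k : ℕ}

lemma mem_content_big {x : ℕ} (hm : m + 1 ≤ n) (hx : x ∈ content n (m+1)) :
    n - m ≤ x ∧ x ≤ n := by
  simp only [content, Finset.mem_Icc] at hx
  omega

lemma mem_content_small {x : ℕ} (hx : x ∈ content n m) : n - m < x ∧ x ≤ n := by
  simp only [content, Finset.mem_Icc] at hx
  omega

lemma fiber_pos (hm : m + 1 ≤ n) {β : Fin k → ℕ} (T : RSCT n (m+1) k β) :
    β (T.1 ⟨n - m, hmem hm⟩) ≠ 0 := by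
  rw [← T.2 (T.1 ⟨n - m, hmem hm⟩)]
  exact Finset.card_ne_zero_of_mem
    (Finset.mem_filter.2 ⟨Finset.mem_univ _, rfl⟩)

/-- `colOf` of an element of the fiber of `j`, as a filter of the fiber. -/
lemma colOf_fiber {β : Fin k → ℕ} (T : RSCT n m k β) (x : {a : ℕ // a ∈ content n m})
    (j : Fin k) (hx : T.1 x = j) :
    colOf T x = ((Finset.univ.filter fun y => T.1 y = j).filter
      fun y : {a : ℕ // a ∈ content n m} => (x : ℕ) < (y : ℕ)).card := by
  rw [colOf, Finset.filter_filter]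
  congr 1
  apply Finset.filter_congr
  intro y _
  rw [hx]

lemma colOf_le {β : Fin k → ℕ} (T : RSCT n m k β)
    (x : {a : ℕ // a ∈ content n m}) (j : Fin k) (hx : T.1 x = j) :
    colOf T x ≤ β j - 1 ∧ 1 ≤ β j := by
  have hmem : x ∈ Finset.univ.filter fun y => T.1 y = j :=
    Finset.mem_filter.2 ⟨Finset.mem_univ _, hx⟩
  have hpos : 1 ≤ β j := by
    rw [← T.2 j]
    exact Finset.card_ne_zero_of_mem hmem |> Nat.one_le_iff_ne_zero.2
  refine ⟨?_, hpos⟩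
  rw [colOf_fiber T x j hx]
  have hsub2 : ((Finset.univ.filter fun y => T.1 y = j).filter
      fun y : {a : ℕ // a ∈ content n m} => (x : ℕ) < (y : ℕ))
      ⊆ (Finset.univ.filter fun y => T.1 y = j).erase x := by
    intro y hy
    rw [Finset.mem_filter] at hy
    refine Finset.mem_erase.2 ⟨?_, hy.1⟩
    intro h
    rw [h] at hy
    exact lt_irrefl _ hy.2
  calc _ ≤ ((Finset.univ.filter fun y => T.1 y = j).erase x).card :=
        Finset.card_le_card hsub2
    _ = β j - 1 := by rw [Finset.card_erase_of_mem hmem, T.2 j]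

lemma colOf_exists {β : Fin k → ℕ} (T : RSCT n m k β) (j : Fin k) (t : ℕ) (ht : t < β j) :
    ∃ x : {a : ℕ // a ∈ content n m}, T.1 x = j ∧ colOf T x = t := by
  have ht' : t < (Finset.univ.filter fun y => T.1 y = j).card := by rwa [T.2 j]
  obtain ⟨x, hxmem, hxc⟩ := exists_rank_gt (Finset.univ.filter fun y => T.1 y = j) t ht'
  refine ⟨x, (Finset.mem_filter.1 hxmem).2, ?_⟩
  rw [colOf_fiber T x j (Finset.mem_filter.1 hxmem).2]
  rw [← hxc]
  congr 1

end Core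

section Core2

variable {n m k : ℕ}

lemma colOf_min (hm : m + 1 ≤ n) {β : Fin k → ℕ} (T : RSCT n (m+1) k β) :
    colOf T ⟨n - m, hmem hm⟩ = β (T.1 ⟨n - m, hmem hm⟩) - 1 := by
  classical
  set r := T.1 ⟨n - m, hmem hm⟩ with hr
  have hfib : β r = ((content n m).attach.filter
      fun i : {a : ℕ // a ∈ content n m} => T.1 ⟨i.1, hsub hm i.2⟩ = r).card + 1 := by
    rw [← T.2 r]
    simp only [Finset.univ_eq_attach]
    rw [card_pred hm (fun i' => T.1 i' = r)]
    rw [if_pos hr.symm]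
  have hcol : colOf T ⟨n - m, hmem hm⟩ = ((content n m).attach.filter
      fun i : {a : ℕ // a ∈ content n m} =>
        T.1 ⟨i.1, hsub hm i.2⟩ = r ∧ n - m < i.1).card := by
    rw [colOf]
    simp only [Finset.univ_eq_attach]
    rw [card_pred hm (fun i' => T.1 i' = r ∧ n - m < i'.1)]
    rw [if_neg (by simp)]
    simp
  rw [hcol]
  have : ((content n m).attach.filter
      fun i : {a : ℕ // a ∈ content n m} => T.1 ⟨i.1, hsub hm i.2⟩ = r ∧ n - m < i.1)
      = ((content n m).attach.filter
      fun i : {a : ℕ // a ∈ content n m} => T.1 ⟨i.1, hsub hm i.2⟩ = r) := by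
    apply Finset.filter_congr
    intro x _
    have := mem_content_small x.2
    constructor
    · exact fun h => h.1
    · exact fun h => ⟨h, this.1⟩
  rw [this]
  omega

variable (hm : m + 1 ≤ n) {β β' : Fin k → ℕ} (T : RSCT n (m+1) k β) (T' : RSCT n m k β')
  (hval : ∀ (i : ℕ) (hi : i ∈ content n m), T'.1 ⟨i, hi⟩ = T.1 ⟨i, hsub hm hi⟩)

include hval

lemma colOf_agree (i : ℕ) (hi : i ∈ content n m) :
    colOf T ⟨i, hsub hm hi⟩ = colOf T' ⟨i, hi⟩ := by
  classical
  rw [colOf]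
  simp only [Finset.univ_eq_attach]
  rw [card_pred hm (fun i' => T.1 i' = T.1 ⟨i, hsub hm hi⟩ ∧ i < i'.1)]
  rw [if_neg (by
    rintro ⟨-, h⟩
    have h' : i < n - m := h
    have := mem_content_small hi
    omega)]
  rw [colOf, add_zero]
  simp only [Finset.univ_eq_attach]
  congr 1
  apply Finset.filter_congr
  intro x _
  rw [hval x.1 x.2, hval i hi]

lemma isInv_agree (i : ℕ) (hi : i ∈ content n m) (j : Fin k) :
    isInv T i j ↔ isInv T' i j := by
  constructor
  · rintro ⟨h, i', hij, hlt, hcol⟩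
    have hi'm : i'.1 ∈ content n m := by
      have h1 := mem_content_big hm i'.2
      have h2 := mem_content_small hi
      simp only [content, Finset.mem_Icc]
      omega
    refine ⟨hi, ⟨i'.1, hi'm⟩, ?_, hlt, ?_⟩
    · rw [hval i'.1 hi'm]; exact hij
    · have e1 : colOf T' ⟨i'.1, hi'm⟩ = colOf T i' := by
        rw [← colOf_agree hm T T' hval i'.1 hi'm]
      have e2 : colOf T' ⟨i, hi⟩ = colOf T ⟨i, h⟩ := by
        rw [← colOf_agree hm T T' hval i hi]
      have e3 : T'.1 ⟨i, hi⟩ = T.1 ⟨i, h⟩ := hval i hi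
      rw [e1, e2, e3]
      exact hcol
  · rintro ⟨h, i', hij, hlt, hcol⟩
    refine ⟨hsub hm hi, ⟨i'.1, hsub hm i'.2⟩, ?_, hlt, ?_⟩
    · rw [← hval i'.1 i'.2]; exact hij
    · have e1 : colOf T ⟨i'.1, hsub hm i'.2⟩ = colOf T' i' :=
        colOf_agree hm T T' hval i'.1 i'.2
      have e2 : colOf T ⟨i, hsub hm hi⟩ = colOf T' ⟨i, h⟩ :=
        colOf_agree hm T T' hval i h
      have e3 : T.1 ⟨i, hsub hm hi⟩ = T'.1 ⟨i, h⟩ := (hval i h).symm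
      rw [e1, e2, e3]
      exact hcol

end Core2

section Core3

variable {n m k : ℕ}

lemma isInv_min (hm : m + 1 ≤ n) {β : Fin k → ℕ} (T : RSCT n (m+1) k β) (j : Fin k) :
    isInv T (n - m) j ↔
      (β (T.1 ⟨n - m, hmem hm⟩) < β j ∨
        (j < T.1 ⟨n - m, hmem hm⟩ ∧ β j = β (T.1 ⟨n - m, hmem hm⟩))) := by
  set r := T.1 ⟨n - m, hmem hm⟩ with hr
  have hrpos : β r ≠ 0 := fiber_pos hm T
  have hcolmin : colOf T ⟨n - m, hmem hm⟩ = β r - 1 := colOf_min hm T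
  constructor
  · rintro ⟨h, i', hij, hlt, hcol⟩
    have hcolmin' : colOf T ⟨n - m, h⟩ = β r - 1 := hcolmin
    have hbnd := colOf_le T i' j hij
    have hrval : T.1 ⟨n - m, h⟩ = r := hr.symm
    rcases hcol with hc | ⟨hc, hjr⟩
    · rw [hcolmin'] at hc
      -- β r - 1 < colOf T i' ≤ β j - 1
      left
      omega
    · rw [hcolmin'] at hc
      rw [hrval] at hjr
      by_cases hbb : β r < β j
      · exact Or.inl hbb
      · right
        exact ⟨hjr, by omega⟩
  · intro hcase
    have hjpos : 1 ≤ β j := by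
      rcases hcase with h | ⟨-, h⟩ <;> omega
    have hjne : j ≠ r := by
      rcases hcase with h | ⟨h, -⟩
      · intro he; rw [he] at h; exact lt_irrefl _ h
      · exact ne_of_lt h
    have hxgt : ∀ x : {a : ℕ // a ∈ content n (m+1)}, T.1 x = j → n - m < x.1 := by
      intro x hx
      have h1 := (mem_content_big hm x.2).1
      rcases Nat.lt_or_ge (n - m) x.1 with h | h
      · exact h
      · exfalso
        have hxe : x = ⟨n - m, hmem hm⟩ := Subtype.ext (show x.1 = n - m by omega)
        rw [hxe] at hx
        exact hjne (hx.symm ▸ rfl)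
    rcases hcase with hbb | ⟨hjr, hbe⟩
    · obtain ⟨x, hxj, hxc⟩ := colOf_exists T j (β j - 1) (by omega)
      refine ⟨hmem hm, x, hxj, hxgt x hxj, Or.inl ?_⟩
      rw [hcolmin, hxc]
      omega
    · obtain ⟨x, hxj, hxc⟩ := colOf_exists T j (β r - 1) (by omega)
      refine ⟨hmem hm, x, hxj, hxgt x hxj, Or.inr ⟨?_, ?_⟩⟩
      · rw [hcolmin, hxc]
      · rw [← hr]; exact hjr

lemma cnt_min (hm : m + 1 ≤ n) {β : Fin k → ℕ} (T : RSCT n (m+1) k β) :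
    cnt T (n - m) = cRank β (T.1 ⟨n - m, hmem hm⟩) := by
  classical
  set r := T.1 ⟨n - m, hmem hm⟩ with hr
  rw [cnt]
  have h1 : (@Finset.filter (Fin k) (fun j => isInv T (n - m) j) (Classical.decPred _)
      Finset.univ) = Finset.univ.filter fun j => β r < β j ∨ (j < r ∧ β j = β r) := by
    apply Finset.filter_congr
    intro j _
    exact isInv_min hm T j
  rw [h1, Finset.filter_or, Finset.card_union_of_disjoint, cRank]
  rw [Finset.disjoint_left]
  intro j hj1 hj2
  simp only [Finset.mem_filter, Finset.mem_univ, true_and] at hj1 hj2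
  omega

lemma decomp (hm : m + 1 ≤ n) {β β' : Fin k → ℕ} (T : RSCT n (m+1) k β)
    (T' : RSCT n m k β')
    (hval : ∀ (i : ℕ) (hi : i ∈ content n m), T'.1 ⟨i, hi⟩ = T.1 ⟨i, hsub hm hi⟩) :
    invVec T = fun t =>
      (if t = n - m then cRank β (T.1 ⟨n - m, hmem hm⟩) else 0) + invVec T' t := by
  classical
  funext t
  by_cases h1 : t = n - m
  · subst h1
    rw [if_pos rfl, invVec_eq_cnt, cnt_min hm T, invVec_eq_cnt, cnt_of_not_mem T' _ hnot,
      add_zero]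
  · rw [if_neg h1, zero_add, invVec_eq_cnt, invVec_eq_cnt]
    by_cases h2 : t ∈ content n m
    · rw [cnt, cnt]
      congr 1
      apply Finset.filter_congr
      intro j _
      exact isInv_agree hm T T' hval t h2 j
    · have h3 : t ∉ content n (m+1) := by
        rw [hins hm]
        simp only [Finset.mem_insert]
        tauto
      rw [cnt_of_not_mem T t h3, cnt_of_not_mem T' t h2]

end Core3

section Construct

variable {n m k : ℕ}

lemma exists_res (hm : m + 1 ≤ n) {β : Fin k → ℕ} (T : RSCT n (m+1) k β) :
    ∃ T' : RSCT n m k (Function.update β (T.1 ⟨n - m, hmem hm⟩)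
        (β (T.1 ⟨n - m, hmem hm⟩) - 1)),
      ∀ (i : ℕ) (hi : i ∈ content n m), T'.1 ⟨i, hi⟩ = T.1 ⟨i, hsub hm hi⟩ := by
  classical
  set r := T.1 ⟨n - m, hmem hm⟩ with hr
  refine ⟨⟨fun i => T.1 ⟨i.1, hsub hm i.2⟩, ?_⟩, fun i hi => rfl⟩
  intro j
  have hc := card_pred hm (fun i' => T.1 i' = j)
  have hfib : (Finset.univ.filter fun i' => T.1 i' = j).card = β j := T.2 j
  simp only [Finset.univ_eq_attach] at hfib ⊢
  by_cases hjr : j = r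
  · subst hjr
    rw [if_pos hr.symm] at hc
    rw [Function.update_self]
    omega
  · rw [if_neg (fun h => hjr (hr ▸ h.symm))] at hc
    rw [Function.update_of_ne hjr]
    omega

lemma exists_ext (hm : m + 1 ≤ n) {β : Fin k → ℕ} (r : Fin k) (hr : β r ≠ 0)
    (T' : RSCT n m k (Function.update β r (β r - 1))) :
    ∃ T : RSCT n (m+1) k β, T.1 ⟨n - m, hmem hm⟩ = r ∧
      ∀ (i : ℕ) (hi : i ∈ content n m), T'.1 ⟨i, hi⟩ = T.1 ⟨i, hsub hm hi⟩ := by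
  classical
  set f : {a : ℕ // a ∈ content n (m+1)} → Fin k := fun i =>
    if h : i.1 ∈ content n m then T'.1 ⟨i.1, h⟩ else r with hf
  have hfmin : f ⟨n - m, hmem hm⟩ = r := by
    rw [hf]
    exact dif_neg hnot
  have hfval : ∀ (i : ℕ) (hi : i ∈ content n m), f ⟨i, hsub hm hi⟩ = T'.1 ⟨i, hi⟩ := by
    intro i hi
    rw [hf]
    exact dif_pos hi
  refine ⟨⟨f, ?_⟩, hfmin, fun i hi => (hfval i hi).symm⟩
  intro j
  have hc := card_pred hm (fun i' => f i' = j)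
  have heq : ((content n m).attach.filter fun i : {a : ℕ // a ∈ content n m} =>
      f ⟨i.1, hsub hm i.2⟩ = j) = ((content n m).attach.filter
      fun i : {a : ℕ // a ∈ content n m} => T'.1 i = j) := by
    apply Finset.filter_congr
    intro x _
    rw [hfval x.1 x.2]
  rw [heq] at hc
  have hfib : ((content n m).attach.filter
      fun i : {a : ℕ // a ∈ content n m} => T'.1 i = j).card
      = Function.update β r (β r - 1) j := by
    rw [← T'.2 j]
    simp only [Finset.univ_eq_attach]
  simp only [Finset.univ_eq_attach]
  rw [hc, hfib, hfmin]
  by_cases hjr : j = r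
  · subst hjr
    rw [if_pos rfl, Function.update_self]
    omega
  · rw [if_neg (fun h => hjr h.symm), Function.update_of_ne hjr, add_zero]

end Construct

section MainLemma

lemma content_zero (n : ℕ) : content n 0 = ∅ := by
  simp only [content, Nat.sub_zero]
  exact Finset.Icc_eq_empty (by omega)

lemma rsct_zero_empty (n : ℕ) : IsEmpty {a : ℕ // a ∈ content n 0} :=
  ⟨fun i => Finset.eq_empty_iff_forall_notMem.1 (content_zero n) i.1 i.2⟩

lemma invVec_zero {n k : ℕ} {β : Fin k → ℕ} (T : RSCT n 0 k β) :
    invVec T = fun _ => 0 := by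
  funext t
  rw [invVec_eq_cnt]
  apply cnt_of_not_mem
  rw [content_zero]
  exact Finset.notMem_empty _

lemma sum_update_pred {k : ℕ} (β : Fin k → ℕ) (r : Fin k) (hr : β r ≠ 0) (m : ℕ)
    (hsum : ∑ j, β j = m + 1) : ∑ j, Function.update β r (β r - 1) j = m := by
  rw [Finset.sum_update_of_mem (Finset.mem_univ r)]
  have h2 : β r + ∑ x ∈ Finset.univ.erase r, β x = m + 1 := by
    rw [Finset.add_sum_erase _ β (Finset.mem_univ r)]
    exact hsum
  rw [Finset.sdiff_singleton_eq_erase]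
  omega

lemma main (n : ℕ) (SP : Multiset ℕ → ℕ → Set (ℕ → ℕ)) (hSP : SPSpec SP) :
    ∀ (m : ℕ), m ≤ n → ∀ (k : ℕ) (β : Fin k → ℕ), (∑ j, β j = m) →
      {e : ℕ → ℕ | ∃ T : RSCT n m k β, e = invVec T} = SP (parts β) (n - m + 1) := by
  intro m
  induction m with
  | zero =>
    intro hmn k β hsum
    have hβ : ∀ j, β j = 0 := fun j =>
      Finset.sum_eq_zero_iff.1 hsum j (Finset.mem_univ j)
    have hparts : parts β = 0 := by
      rw [parts]
      rw [Multiset.filter_eq_nil]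
      intro a ha
      rw [Multiset.mem_coe] at ha
      obtain ⟨j, hj⟩ := Set.mem_range.1 ((List.mem_ofFn' _ _).1 ha)
      rw [← hj, hβ j]
      simp
    rw [hparts, hSP.1 (n - 0 + 1)]
    ext e
    simp only [Set.mem_setOf_eq, Set.mem_singleton_iff]
    constructor
    · rintro ⟨T, rfl⟩
      exact invVec_zero T
    · rintro rfl
      haveI := rsct_zero_empty n
      refine ⟨⟨fun i => isEmptyElim i, ?_⟩, (invVec_zero _).symm⟩
      intro j
      rw [Finset.univ_eq_empty, Finset.filter_empty, Finset.card_empty, hβ j]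
  | succ m ih =>
    intro hmn k β hsum
    have hm : m + 1 ≤ n := hmn
    have hs : n - (m + 1) + 1 = n - m := by omega
    have hs2 : n - (m + 1) + 1 + 1 = n - m + 1 := by omega
    have hμne : parts β ≠ 0 := by
      have hex : ∃ j, β j ≠ 0 := by
        by_contra hall
        push_neg at hall
        rw [Finset.sum_eq_zero (fun j _ => hall j)] at hsum
        omega
      obtain ⟨j, hj⟩ := hex
      intro h0
      have hmem' : β j ∈ parts β := Multiset.mem_filter.2
        ⟨Multiset.mem_coe.2 ((List.mem_ofFn' _ _).2 (Set.mem_range.2 ⟨j, rfl⟩)), hj⟩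
      rw [h0] at hmem'
      exact absurd hmem' (Multiset.notMem_zero _)
    rw [hSP.2 (parts β) (n - (m + 1) + 1) hμne]
    ext e
    simp only [Set.mem_setOf_eq]
    constructor
    · rintro ⟨T, rfl⟩
      set r := T.1 ⟨n - m, hmem hm⟩ with hr
      have hrne : β r ≠ 0 := fiber_pos hm T
      obtain ⟨T', hval⟩ := exists_res hm T
      refine ⟨cRank β r, cRank_lt β r hrne, invVec T', ?_, ?_⟩
      · rw [dropPart_parts β r hrne (cRank β r) (cRank_getD β r hrne), hs2]
        rw [← ih (by omega) k (Function.update β r (β r - 1))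
          (sum_update_pred β r hrne m hsum)]
        exact ⟨T', rfl⟩
      · rw [hs]
        exact decomp hm T T' hval
    · rintro ⟨i, hi, f, hf, rfl⟩
      obtain ⟨r, hrne, hcr⟩ := cRank_surj β i hi
      have hgd : (dlist β).getD i 0 = β r := by
        rw [← hcr]
        exact cRank_getD β r hrne
      rw [dropPart_parts β r hrne i hgd, hs2,
        ← ih (by omega) k (Function.update β r (β r - 1))
          (sum_update_pred β r hrne m hsum)] at hf
      obtain ⟨T', rfl⟩ := hf
      obtain ⟨T, hTmin, hval⟩ := exists_ext hm r hrne T'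
      refine ⟨T, ?_⟩
      rw [hs]
      rw [decomp hm T T' hval, hTmin, hcr]

end MainLemma

/-- Let `λ` be the underlying partition of a composition `β` of `m ≤ n`.
The set of monomials `x^Υ` (recorded by their exponent vectors, the inversion vectors of the
Springer inversion sets) over all row-strict composition tableaux `Υ` of shape `β` equals
the Garsia–Procesi set `Sp_λ` in the variables starting at `m̄ = n - m + 1`.  In particular
this set depends only on `λ` and not on the ordering of the parts of `β`. -/
theorem stmt5 (n m k : ℕ) (hmn : m ≤ n) (β : Fin k → ℕ) (hsum : ∑ j, β j = m)
    (SP : Multiset ℕ → ℕ → Set (ℕ → ℕ)) (hSP : SPSpec SP) :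
    {e : ℕ → ℕ | ∃ T : RSCT n m k β, e = invVec T} =
      SP (Multiset.filter (· ≠ 0) (↑(List.ofFn β) : Multiset ℕ)) (n - m + 1) ∧
    (∀ (k' : ℕ) (β' : Fin k' → ℕ), (∑ j, β' j = m) →
      Multiset.filter (· ≠ 0) (↑(List.ofFn β') : Multiset ℕ) =
        Multiset.filter (· ≠ 0) (↑(List.ofFn β) : Multiset ℕ) →
      {e : ℕ → ℕ | ∃ T : RSCT n m k' β', e = invVec T} =
        {e : ℕ → ℕ | ∃ T : RSCT n m k β, e = invVec T}) := by
  constructor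
  · exact main n SP hSP m hmn k β hsum
  · intro k' β' hsum' hpp
    have h1 := main n SP hSP m hmn k' β' hsum'
    have h2 := main n SP hSP m hmn k β hsum
    rw [h1, h2]
    have hpp' : parts β' = parts β := hpp
    rw [hpp']
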